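/- arXiv:math/0605126 — 9 statements merged into one kernel-verified Lean document; each statement's English description precedes it below -/
import Mathlib

section
/- Let L be a finite lattice, R a commutative ring, and f : L → R any function. Then the determinant of the L×L matrix whose (a,b)-entry is f(a ⊓ b) equals the product over all y ∈ L of p_y, where p_y = ∑_{u ≤ y} μ(u,y)·f(u) and μ denotes the (integer-valued) Möbius function of L. -/
open Finset Matrix IncidenceAlgebra

section aux

variable {L R : Type*} [Lattice L] [Fintype L] [DecidableEq L]
    [LocallyFiniteOrder L] [DecidableRel (· ≤ · : L → L → Prop)] [CommRing R]

private lemma lw_sum_Iic (f : L → R) (x : L) :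
    ∑ y ∈ univ.filter (· ≤ x), ∑ u ∈ univ.filter (· ≤ y), ((mu ℤ u y : ℤ) : R) * f u
      = f x := by
  rw [Finset.sum_comm' (t' := univ.filter (· ≤ x)) (s' := fun u => Icc u x)
    (by intro y u; simp only [mem_filter, mem_univ, true_and, mem_Icc]
        constructor <;> (rintro ⟨h1, h2⟩)
        exacts [⟨⟨h2, h1⟩, h2.trans h1⟩, ⟨h1.2, h1.1⟩])]
  have : ∀ u ∈ univ.filter (· ≤ x), ∑ y ∈ Icc u x, ((mu ℤ u y : ℤ) : R) * f u
      = (if u = x then 1 else 0) * f u := by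
    intro u _
    rw [← Finset.sum_mul]
    congr 1
    rw [← Int.cast_sum, sum_Icc_mu_right]
    simp
  rw [Finset.sum_congr rfl this]
  simp

omit [LocallyFiniteOrder L] in
private lemma lw_det_zeta :
    (Matrix.of fun y a : L => (if y ≤ a then 1 else 0 : R)).det = 1 := by
  classical
  set Z : Matrix L L R := Matrix.of fun y a : L => (if y ≤ a then 1 else 0 : R)
  have hb : Function.Injective (toLinearExtension : L →o LinearExtension L) := fun a b h => h
  have ht : Z.BlockTriangular (toLinearExtension : L →o LinearExtension L) := by
    intro y a h
    simp only [Z, Matrix.of_apply, ite_eq_right_iff]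
    intro hya
    exact absurd (toLinearExtension.monotone hya) (not_le_of_gt h)
  rw [ht.det]
  refine Finset.prod_eq_one ?_
  intro k hk
  obtain ⟨a, -, ha⟩ := Finset.mem_image.1 hk
  haveI : Unique {i : L // (toLinearExtension : L →o LinearExtension L) i = k} :=
    ⟨⟨⟨a, ha⟩⟩, fun i => Subtype.ext (hb (i.2.trans ha.symm))⟩
  rw [Matrix.det_unique]
  simp [Matrix.toSquareBlock_def, Z]

end aux

/-- **Lindström–Wilf determinant formula.** For a finite lattice `L`, a commutative
ring `R` and any function `f : L → R`, the determinant of the `L × L` matrix with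
`(a, b)`-entry `f (a ⊓ b)` equals `∏ y, p_y` where
`p_y = ∑_{u ≤ y} μ(u, y) • f u` and `μ` is the Möbius function of `L`. -/
theorem lindstrom_wilf_det (L R : Type*) [Lattice L] [Fintype L] [DecidableEq L]
    [LocallyFiniteOrder L] [DecidableRel (· ≤ · : L → L → Prop)] [CommRing R] (f : L → R) :
    (Matrix.of fun a b : L => f (a ⊓ b)).det =
      ∏ y : L, ∑ u ∈ Finset.univ.filter (· ≤ y),
        ((IncidenceAlgebra.mu ℤ u y : ℤ) : R) * f u := by
  classical
  set p : L → R := fun y => ∑ u ∈ univ.filter (· ≤ y), ((mu ℤ u y : ℤ) : R) * f u with hp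
  set Z : Matrix L L R := Matrix.of fun a y : L => (if y ≤ a then 1 else 0 : R) with hZ
  have hM : (Matrix.of fun a b : L => f (a ⊓ b)) = Z * Matrix.diagonal p * Zᵀ := by
    ext a b
    rw [Matrix.mul_apply]
    simp only [Matrix.mul_diagonal, Matrix.transpose_apply, Matrix.of_apply, hZ]
    have : ∀ y : L, (if y ≤ a then (1 : R) else 0) * p y * (if y ≤ b then 1 else 0)
        = if y ∈ univ.filter (· ≤ a ⊓ b) then p y else 0 := by
      intro y
      by_cases h1 : y ≤ a <;> by_cases h2 : y ≤ b <;>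
        simp [h1, h2, le_inf_iff, mul_comm]
    rw [Finset.sum_congr rfl (fun y _ => this y), Finset.sum_ite_mem,
      Finset.univ_inter]
    exact (lw_sum_Iic f (a ⊓ b)).symm
  rw [hM, Matrix.det_mul, Matrix.det_mul, Matrix.det_diagonal, Matrix.det_transpose]
  have hdz : Z.det = 1 := by
    rw [← Matrix.det_transpose]
    exact lw_det_zeta
  rw [hdz]
  ring
end

section
/- Let q be a prime power, V an n-dimensional vector space over 𝔽_q, K a field of characteristic zero, and t ∈ K with t ≠ q^i (cast into K) for every natural number i < n. Then the matrix, indexed by pairs of 𝔽_q-subspaces (U, W) of V, with (U,W)-entry t^{finrank (U ⊓ W)}, has nonzero determinant. -/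
open Module Matrix Polynomial

set_option linter.unusedSectionVars false

section Aux
variable {F : Type*} [Field F] [Fintype F] {K : Type*} [Field K] [CharZero K]


/-- Linear maps out of `M` are classified by kernel plus injection from quotient. -/
noncomputable def homEquivSigma (M W : Type*) [AddCommGroup M] [Module F M]
    [AddCommGroup W] [Module F W] :
    (Σ X : Submodule F M, {g : (M ⧸ X) →ₗ[F] W // Function.Injective g}) ≃ (M →ₗ[F] W) := by
  refine Equiv.ofBijective (fun p => p.2.1.comp p.1.mkQ) ⟨?_, ?_⟩
  · rintro ⟨X, g, hg⟩ ⟨X', g', hg'⟩ h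
    dsimp at h
    have hker : ∀ (X : Submodule F M) (g : (M ⧸ X) →ₗ[F] W), Function.Injective g →
        LinearMap.ker (g.comp X.mkQ) = X := by
      intro X g hg
      rw [LinearMap.ker_comp, LinearMap.ker_eq_bot.2 hg, Submodule.comap_bot,
        Submodule.ker_mkQ]
    obtain rfl : X = X' := by rw [← hker X g hg, ← hker X' g' hg', h]
    simp only [Sigma.mk.inj_iff, heq_eq_eq, true_and]
    ext1
    exact (LinearMap.cancel_right (Submodule.mkQ_surjective X)).1 h
  · intro f
    refine ⟨⟨LinearMap.ker f, (LinearMap.ker f).liftQ f le_rfl, ?_⟩, ?_⟩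
    · rw [← LinearMap.ker_eq_bot]
      exact Submodule.ker_liftQ_eq_bot _ _ _ le_rfl
    · exact Submodule.liftQ_mkQ _ _ _



lemma inj_equiv_indep (N W : Type*) [AddCommGroup N] [Module F N] [FiniteDimensional F N]
    [AddCommGroup W] [Module F W] :
    Nonempty ({g : N →ₗ[F] W // Function.Injective g} ≃
      {s : Fin (finrank F N) → W // LinearIndependent F s}) := by
  classical
  let b : Basis (Fin (finrank F N)) F N := finBasis F N
  refine ⟨{ toFun := fun g => ⟨g.1 ∘ b, b.linearIndependent.map' g.1 (LinearMap.ker_eq_bot.2 g.2)⟩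
            invFun := fun s => ⟨b.constr F s.1, ?_⟩
            left_inv := ?_, right_inv := ?_ }⟩
  · refine LinearMap.ker_eq_bot.1 ((Submodule.eq_bot_iff _).2 fun x hx => ?_)
    rw [LinearMap.mem_ker, Basis.constr_apply_fintype F] at hx
    have h0 : ∀ i, b.equivFun x i = 0 := Fintype.linearIndependent_iff.1 s.2 _ hx
    have hz : b.equivFun x = 0 := funext h0
    have := congrArg b.equivFun.symm hz
    rwa [LinearEquiv.symm_apply_apply, map_zero] at this
  · rintro ⟨g, hg⟩
    ext1
    exact b.ext fun i => b.constr_basis F _ i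
  · rintro ⟨s, hs⟩
    ext1
    funext i
    exact b.constr_basis F s i

lemma card_inj_cast (q : ℕ) (hFq : Fintype.card F = q)
    (N : Type*) [AddCommGroup N] [Module F N] [FiniteDimensional F N] (j : ℕ) :
    (Nat.card {g : N →ₗ[F] (Fin j → F) // Function.Injective g} : K)
      = ∏ i ∈ Finset.range (finrank F N), ((q : K) ^ j - (q : K) ^ i) := by
  classical
  have hq1 : 1 ≤ q := hFq ▸ Fintype.card_pos
  have hW : finrank F (Fin j → F) = j := by simp
  rcases le_or_gt (finrank F N) j with hle | hlt
  · have e := (inj_equiv_indep (F := F) N (Fin j → F)).some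
    rw [Nat.card_congr e]
    have hcard := card_linearIndependent (K := F) (V := Fin j → F) (k := finrank F N)
      (by rw [hW]; exact hle)
    rw [hcard, hFq, hW, Nat.cast_prod,
      ← Fin.prod_univ_eq_prod_range (fun i => ((q : K) ^ j - (q : K) ^ i)) (finrank F N)]
    refine Finset.prod_congr rfl fun i _ => ?_
    have hij : (i : ℕ) ≤ j := le_trans (le_of_lt i.2) hle
    rw [Nat.cast_sub (Nat.pow_le_pow_right hq1 hij)]
    push_cast
    ring
  · have hempty : IsEmpty {g : N →ₗ[F] (Fin j → F) // Function.Injective g} := by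
      refine ⟨fun g => absurd (LinearMap.finrank_le_finrank_of_injective g.2) ?_⟩
      rw [hW]; exact not_le.2 hlt
    rw [Nat.card_of_isEmpty, Nat.cast_zero, eq_comm]
    refine Finset.prod_eq_zero (Finset.mem_range.2 hlt) ?_
    simp




lemma counting (q : ℕ) (hFq : Fintype.card F = q)
    (M : Type*) [AddCommGroup M] [Module F M] [FiniteDimensional F M]
    [Fintype (Submodule F M)] (j : ℕ) :
    (((q : K) ^ j) ^ finrank F M)
      = ∑ X : Submodule F M,
          ∏ i ∈ Finset.range (finrank F (M ⧸ X)), ((q : K) ^ j - (q : K) ^ i) := by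
  classical
  have hfin : Finite M := Module.finite_of_finite F
  have hW : finrank F (Fin j → F) = j := by simp
  haveI : Finite (M →ₗ[F] (Fin j → F)) := Finite.of_injective _ DFunLike.coe_injective
  letI : Fintype (M →ₗ[F] (Fin j → F)) := Fintype.ofFinite _
  have hcard : (Fintype.card (M →ₗ[F] (Fin j → F)) : K) = ((q : K) ^ j) ^ finrank F M := by
    rw [card_eq_pow_finrank (K := F) (V := M →ₗ[F] (Fin j → F)), hFq,
      Module.finrank_linearMap, hW]
    push_cast
    rw [← pow_mul, mul_comm]
  rw [← hcard]
  haveI : ∀ X : Submodule F M, Finite (M ⧸ X) :=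
    fun X => Finite.of_surjective _ (Submodule.mkQ_surjective X)
  haveI : ∀ X : Submodule F M, Finite ((M ⧸ X) →ₗ[F] (Fin j → F)) :=
    fun X => Finite.of_injective _ DFunLike.coe_injective
  letI : ∀ X : Submodule F M, Fintype {g : (M ⧸ X) →ₗ[F] (Fin j → F) // Function.Injective g} :=
    fun X => Fintype.ofFinite _
  have hsig := Nat.card_congr (homEquivSigma (F := F) M (Fin j → F)).symm
  rw [Nat.card_eq_fintype_card, Nat.card_eq_fintype_card, Fintype.card_sigma] at hsig
  rw [hsig]
  push_cast
  refine Finset.sum_congr rfl fun X _ => ?_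
  rw [← Nat.card_eq_fintype_card]
  exact card_inj_cast q hFq (M ⧸ X) j

lemma duality (M : Type*) [AddCommGroup M] [Module F M] [FiniteDimensional F M]
    [Fintype (Submodule F M)] (u : ℕ → K) :
    ∑ X : Submodule F M, u (finrank F (M ⧸ X)) = ∑ X : Submodule F M, u (finrank F X) := by
  classical
  haveI : Finite (Dual F M) := Module.finite_of_finite F
  haveI : Finite (Submodule F (Dual F M)) :=
    Finite.of_injective (fun X => (X : Set (Dual F M))) SetLike.coe_injective
  letI : Fintype (Submodule F (Dual F M)) := Fintype.ofFinite _
  let ψ : M ≃ₗ[F] Dual F M := (Module.Free.chooseBasis F M).toDualEquiv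
  let e : Submodule F M ≃ Submodule F M :=
    ((Subspace.orderIsoFiniteDimensional (K := F) (V := M)).toEquiv.trans
      (OrderDual.ofDual)).trans (Submodule.orderIsoMapComap ψ).symm.toEquiv
  refine Fintype.sum_equiv e _ _ fun X => ?_
  congr 1
  have h1 : finrank F (e X) = finrank F (X.dualAnnihilator) := by
    show finrank F ((Submodule.orderIsoMapComap ψ).symm X.dualAnnihilator) = _
    rw [Submodule.orderIsoMapComap_symm_apply']
    exact LinearEquiv.finrank_map_eq ψ.symm _
  rw [h1]
  exact (Subspace.quotEquivAnnihilator (K := F) (V := M) X).finrank_eq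



lemma key_core (q : ℕ) (hq2 : 2 ≤ q) (hFq : Fintype.card F = q)
    (M : Type*) [AddCommGroup M] [Module F M] [FiniteDimensional F M]
    [Fintype (Submodule F M)] (t : K) :
    ∑ X : Submodule F M, ∏ i ∈ Finset.range (finrank F X), (t - (q : K) ^ i)
      = t ^ finrank F M := by
  classical
  set p : K[X] :=
    (∑ X : Submodule F M, ∏ i ∈ Finset.range (finrank F X), (Polynomial.X - C ((q : K) ^ i)))
      - Polynomial.X ^ finrank F M with hp
  have heval : ∀ s : K, p.eval s =
      (∑ X : Submodule F M, ∏ i ∈ Finset.range (finrank F X), (s - (q : K) ^ i))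
        - s ^ finrank F M := by
    intro s
    simp [hp, eval_finset_sum, eval_prod]
  have hroot : ∀ j : ℕ, p.IsRoot ((q : K) ^ j) := by
    intro j
    have h1 := counting (K := K) q hFq M j
    have h2 := duality (F := F) M
      (fun d => ∏ i ∈ Finset.range d, ((q : K) ^ j - (q : K) ^ i))
    rw [IsRoot, heval, ← h2, ← h1, sub_self]
  have hinj : Function.Injective fun j : ℕ => (q : K) ^ j := by
    intro a b hab
    have : ((q ^ a : ℕ) : K) = ((q ^ b : ℕ) : K) := by push_cast; exact hab
    exact Nat.pow_right_injective hq2 (Nat.cast_injective this)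
  have hp0 : p = 0 := by
    apply p.eq_zero_of_infinite_isRoot
    exact Set.infinite_of_injective_forall_mem (f := fun j : ℕ => (q : K) ^ j) hinj hroot
  have h := heval t
  rw [hp0, eval_zero] at h
  have := sub_eq_zero.1 h.symm
  exact this
end Aux

/-- For an `n`-dimensional vector space `V` over the finite field `F = 𝔽_q` (`q` a prime
power), a field `K` of characteristic zero and `t ∈ K` with `t ≠ q^i` for all `i < n`,
the matrix indexed by pairs of subspaces of `V` with `(U, W)`-entry `t ^ dim (U ⊓ W)`
has nonzero determinant. -/
theorem det_subspace_intersection_matrix_ne_zero (q : ℕ) (hq : IsPrimePow q)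
    (F : Type*) [Field F] [Fintype F] (hFq : Fintype.card F = q)
    (V : Type*) [AddCommGroup V] [Module F V] [FiniteDimensional F V]
    (n : ℕ) (hV : finrank F V = n)
    [Fintype (Submodule F V)] [DecidableEq (Submodule F V)]
    (K : Type*) [Field K] [CharZero K] (t : K)
    (ht : ∀ i : ℕ, i < n → t ≠ (q : K) ^ i) :
    (Matrix.of fun U W : Submodule F V => t ^ finrank F (U ⊓ W : Submodule F V)).det ≠ 0 := by
  classical
  haveI : Finite V := Module.finite_of_finite F
  set g : ℕ → K := fun d => ∏ i ∈ Finset.range d, (t - (q : K) ^ i) with hg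
  -- key identity
  have KI : ∀ S : Submodule F V,
      ∑ X ∈ Finset.univ.filter (· ≤ S), g (finrank F X) = t ^ finrank F S := by
    intro S
    haveI : Finite (Submodule F ↥S) :=
      Finite.of_injective (fun X => (X : Set ↥S)) SetLike.coe_injective
    letI : Fintype (Submodule F ↥S) := Fintype.ofFinite _
    have hc := key_core (K := K) q hq.two_le hFq ↥S t
    rw [Finset.sum_subtype (p := fun X : Submodule F V => X ≤ S) _ (by simp)
      (fun X => g (finrank F X))]
    rw [← hc]
    refine (Fintype.sum_equiv (Submodule.MapSubtype.orderIso S).toEquiv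
      (fun X' : Submodule F ↥S => g (finrank F X'))
      (fun X : {X : Submodule F V // X ≤ S} => g (finrank F (X : Submodule F V)))
      fun X' => ?_).symm
    show g (finrank F X') = g (finrank F (X'.map S.subtype))
    rw [Submodule.finrank_map_subtype_eq]
  -- matrix factorization
  set A : Matrix (Submodule F V) (Submodule F V) K :=
    Matrix.of (fun X U : Submodule F V => if X ≤ U then (1 : K) else 0) with hA
  set D : Matrix (Submodule F V) (Submodule F V) K :=
    Matrix.diagonal (fun X : Submodule F V => g (finrank F X)) with hD
  have hfact : (Matrix.of fun U W : Submodule F V => t ^ finrank F (U ⊓ W : Submodule F V))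
      = Aᵀ * (D * A) := by
    ext U W
    rw [Matrix.mul_apply]
    have hDA : ∀ X, (D * A) X W = g (finrank F X) * A X W := by
      intro X; rw [hD, Matrix.diagonal_mul]
    calc (Matrix.of fun U W : Submodule F V => t ^ finrank F (U ⊓ W : Submodule F V)) U W
        = ∑ X ∈ Finset.univ.filter (· ≤ U ⊓ W), g (finrank F X) := (KI (U ⊓ W)).symm
      _ = ∑ X : Submodule F V, Aᵀ U X * (D * A) X W := by
          rw [Finset.sum_filter]
          refine Finset.sum_congr rfl fun X _ => ?_
          rw [hDA, Matrix.transpose_apply, hA]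
          simp only [Matrix.of_apply]
          by_cases h1 : X ≤ U <;> by_cases h2 : X ≤ W <;>
            simp [h1, h2, le_inf_iff]
  rw [hfact, Matrix.det_mul, Matrix.det_mul, Matrix.det_transpose]
  -- determinant of A
  have hAblock : A.BlockTriangular (fun X => finrank F X) := by
    intro X U h
    rw [hA]
    simp only [Matrix.of_apply]
    rw [if_neg]
    intro hle
    exact absurd (Submodule.finrank_mono hle) (not_le.2 h)
  have hAdet : A.det = 1 := by
    rw [hAblock.det]
    refine Finset.prod_eq_one fun a _ => ?_
    have hblock : A.toSquareBlock (fun X => finrank F X) a = 1 := by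
      ext X U
      simp only [Matrix.toSquareBlock_def, hA, Matrix.of_apply, Matrix.one_apply]
      by_cases hXU : X = U
      · subst hXU; simp
      · rw [if_neg, if_neg hXU]
        intro hle
        exact hXU (Subtype.ext (Submodule.eq_of_le_of_finrank_le hle
          (by rw [X.2, U.2])))
    rw [hblock, Matrix.det_one]
  have hDdet : D.det ≠ 0 := by
    rw [hD, Matrix.det_diagonal]
    refine Finset.prod_ne_zero_iff.2 fun X _ => ?_
    refine Finset.prod_ne_zero_iff.2 fun i hi => ?_
    refine sub_ne_zero.2 (ht i ?_)
    exact lt_of_lt_of_le (Finset.mem_range.1 hi) (hV ▸ Submodule.finrank_le X)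
  rw [hAdet]
  simp [hDdet]
end

section
/- Let p be a prime, G a finite abelian p-group, and m a subgroup of G with Nat.card m = p. Let α be the number of subgroups of G that are lattice complements of m (i.e. the cardinality of {H : Subgroup G // IsCompl H m}). Then for every field K of characteristic zero and every t ∈ K: ∑_{A ≤ G} μ(A, ⊤)·t^{ℓ(A)} = (t − α) · ∑_{B ≤ G/m} μ(B, ⊤)·t^{ℓ(B)}, where the first sum runs over all subgroups of G, the second over all subgroups of the quotient group G ⧸ m, μ denotes in each case the Möbius function of the respective subgroup lattice, and ℓ(H) is the exponent of p in Nat.card H. -/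
open Finset Subgroup

/-- Fiber decomposition of a subtype along a map. -/
private def SFfiberEquiv {X Y : Type*} (f : X → Y) (Q : Y → Prop) :
    {x : X // Q (f x)} ≃ Σ y : {y : Y // Q y}, {x : X // f x = y.1} where
  toFun x := ⟨⟨f x.1, x.2⟩, ⟨x.1, rfl⟩⟩
  invFun z := ⟨z.2.1, by rw [z.2.2]; exact z.1.2⟩
  left_inv x := rfl
  right_inv := by
    rintro ⟨⟨y, hy⟩, ⟨x, hx⟩⟩
    have : f x = y := hx
    subst this
    rfl

private lemma SFcard_sigma {ι : Type*} [Fintype ι] (f : ι → Type*) [∀ i, Finite (f i)] :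
    Nat.card (Σ i, f i) = ∑ i, Nat.card (f i) := by
  letI := fun i => Fintype.ofFinite (f i)
  simp [Nat.card_eq_fintype_card]

private lemma SFcard_fiber {X Y : Type*} [Finite X] [Fintype Y] (f : X → Y) (Q : Y → Prop)
    [DecidablePred Q] :
    Nat.card {x : X // Q (f x)} = ∑ y ∈ univ.filter Q, Nat.card {x : X // f x = y} := by
  rw [Nat.card_congr (SFfiberEquiv f Q), SFcard_sigma]
  exact (Finset.sum_subtype (univ.filter Q) (by simp) fun y => Nat.card {x : X // f x = y}).symm

/-- Number of `s`-tuples generating the group `G`. -/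
private noncomputable def SFgenCount (G : Type*) [Group G] (s : ℕ) : ℕ :=
  Nat.card {v : Fin s → G // Subgroup.closure (Set.range v) = ⊤}

private lemma SFmap_eq_top_iff_of_injective {G G' : Type*} [Group G] [Group G'] (f : G →* G')
    (hinj : Function.Injective f) (hsurj : Function.Surjective f) (A : Subgroup G) :
    A.map f = ⊤ ↔ A = ⊤ := by
  constructor
  · intro h
    apply Subgroup.map_injective hinj
    rw [h, Subgroup.map_top_of_surjective f hsurj]
  · intro h
    rw [h, Subgroup.map_top_of_surjective f hsurj]

private lemma SFrange_comp_closure {G G' : Type*} [Group G] [Group G'] (f : G →* G') {s : ℕ}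
    (v : Fin s → G) :
    Subgroup.closure (Set.range fun i => f (v i)) = (Subgroup.closure (Set.range v)).map f := by
  rw [MonoidHom.map_closure]
  congr 1
  rw [← Set.range_comp]
  rfl

private lemma SFgenCount_congr {G G' : Type*} [Group G] [Group G'] (e : G ≃* G') (s : ℕ) :
    SFgenCount G s = SFgenCount G' s := by
  apply Nat.card_congr
  refine Equiv.subtypeEquiv (Equiv.piCongrRight fun _ => e.toEquiv) fun v => ?_
  show Subgroup.closure (Set.range v) = ⊤ ↔ Subgroup.closure (Set.range fun i => e (v i)) = ⊤
  have := SFrange_comp_closure e.toMonoidHom v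
  simp only [MulEquiv.coe_toMonoidHom] at this
  rw [this, SFmap_eq_top_iff_of_injective e.toMonoidHom e.injective e.surjective]

private lemma SFclosure_coe {G : Type*} [Group G] {H : Subgroup G} {s : ℕ} (w : Fin s → H) :
    Subgroup.closure (Set.range fun i => ((w i : G))) =
      (Subgroup.closure (Set.range w)).map H.subtype :=
  SFrange_comp_closure H.subtype w

private lemma SFclCount_eq {G : Type*} [Group G] (H : Subgroup G) (s : ℕ) :
    Nat.card {v : Fin s → G // Subgroup.closure (Set.range v) = H} = SFgenCount H s := by
  apply Nat.card_congr
  refine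
    { toFun := fun v => ⟨fun i => ⟨v.1 i, ?_⟩, ?_⟩
      invFun := fun w => ⟨fun i => (w.1 i : G), ?_⟩
      left_inv := fun v => Subtype.ext (funext fun i => rfl)
      right_inv := fun w => Subtype.ext (funext fun i => Subtype.ext rfl) }
  · exact v.2.le (Subgroup.subset_closure (Set.mem_range_self i))
  · apply Subgroup.map_injective H.subtype_injective
    rw [← SFclosure_coe, ← MonoidHom.range_eq_map, Subgroup.range_subtype]
    exact v.2
  · rw [SFclosure_coe, w.2, ← MonoidHom.range_eq_map, Subgroup.range_subtype]

private lemma SFcard_pow_eq_sum {G : Type*} [Group G] [Finite G] [Fintype (Subgroup G)]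
    [DecidableEq (Subgroup G)] [LocallyFiniteOrder (Subgroup G)] (A : Subgroup G) (s : ℕ) :
    Nat.card A ^ s =
      ∑ B ∈ Finset.Iic A, Nat.card {v : Fin s → G // Subgroup.closure (Set.range v) = B} := by
  classical
  have h1 : Nat.card A ^ s =
      Nat.card {v : Fin s → G // Subgroup.closure (Set.range v) ≤ A} := by
    have hc : Nat.card (Fin s → A) = Nat.card A ^ s := by
      rw [Nat.card_fun, Nat.card_eq_fintype_card (α := Fin s), Fintype.card_fin]
    rw [← hc]
    apply Nat.card_congr
    refine
      { toFun := fun v => ⟨fun i => (v i : G), ?_⟩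
        invFun := fun v => fun i => ⟨v.1 i, v.2 (Subgroup.subset_closure (Set.mem_range_self i))⟩
        left_inv := fun v => funext fun i => Subtype.ext rfl
        right_inv := fun v => Subtype.ext (funext fun i => rfl) }
    rw [Subgroup.closure_le]
    rintro x ⟨i, rfl⟩
    exact (v i).2
  rw [h1, SFcard_fiber (fun v : Fin s → G => Subgroup.closure (Set.range v)) (· ≤ A)]
  apply Finset.sum_congr
  · ext B; simp
  · intros; rfl

private lemma SFmu_sum_eq_genCount (G : Type*) [Group G] [Finite G] [Fintype (Subgroup G)]
    [DecidableEq (Subgroup G)] [LocallyFiniteOrder (Subgroup G)] (s : ℕ) :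
    ∑ A : Subgroup G,
        (IncidenceAlgebra.mu ℤ A (⊤ : Subgroup G)) * (Nat.card A : ℤ) ^ s =
      (SFgenCount G s : ℤ) := by
  classical
  have h := IncidenceAlgebra.moebius_inversion_bot (𝕜 := ℤ) (α := Subgroup G)
    (fun B => (Nat.card {v : Fin s → G // Subgroup.closure (Set.range v) = B} : ℤ))
    (fun A => (Nat.card A : ℤ) ^ s)
    (fun A => by
      show ((Nat.card A : ℤ)) ^ s = _
      rw [← Nat.cast_pow, SFcard_pow_eq_sum A s, Nat.cast_sum]) ⊤
  rw [show (Finset.Iic (⊤ : Subgroup G)) = Finset.univ by ext B; simp] at h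
  exact h.symm

private lemma SFcard_fiber_mk' {G : Type*} [CommGroup G] (m : Subgroup G) (y : G ⧸ m) :
    Nat.card {g : G // QuotientGroup.mk' m g = y} = Nat.card m := by
  obtain ⟨g0, hg0⟩ := QuotientGroup.mk'_surjective m y
  apply Nat.card_congr
  refine
    { toFun := fun g => ⟨g0⁻¹ * g.1, ?_⟩
      invFun := fun k => ⟨g0 * k.1, ?_⟩
      left_inv := fun g => Subtype.ext (by simp)
      right_inv := fun k => Subtype.ext (by simp) }
  · have : QuotientGroup.mk' m (g0⁻¹ * g.1) = 1 := by
      rw [map_mul, map_inv, hg0, g.2, inv_mul_cancel]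
    have h2 : g0⁻¹ * g.1 ∈ (QuotientGroup.mk' m).ker := this
    rwa [QuotientGroup.ker_mk' m] at h2
  · have hk : QuotientGroup.mk' m k.1 = 1 := by
      rw [← MonoidHom.mem_ker, QuotientGroup.ker_mk' m]; exact k.2
    rw [map_mul, hk, hg0, mul_one]

private lemma SFkey_count {p : ℕ} (hp : p.Prime) {G : Type*} [CommGroup G] [Finite G]
    (m : Subgroup G) (hm : Nat.card m = p) (s : ℕ) :
    p ^ s * SFgenCount (G ⧸ m) s =
      SFgenCount G s + Nat.card {H : Subgroup G // IsCompl H m} * SFgenCount (G ⧸ m) s := by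
  classical
  letI : Fintype (Fin s → G ⧸ m) := Fintype.ofFinite _
  letI : Fintype (Subgroup G) := Fintype.ofFinite _
  set π := QuotientGroup.mk' m with hπ
  have hπs : Function.Surjective π := QuotientGroup.mk'_surjective m
  have step1 : Nat.card {v : Fin s → G // Subgroup.closure (Set.range (π ∘ v)) = ⊤}
      = p ^ s * SFgenCount (G ⧸ m) s := by
    rw [SFcard_fiber (fun v : Fin s → G => π ∘ v)
      (fun w => Subgroup.closure (Set.range w) = ⊤)]
    have hfib : ∀ w : Fin s → G ⧸ m,
        Nat.card {v : Fin s → G // π ∘ v = w} = p ^ s := by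
      intro w
      have e : {v : Fin s → G // π ∘ v = w} ≃ ∀ i, {g : G // π g = w i} :=
        { toFun := fun v => fun i => ⟨v.1 i, congrFun v.2 i⟩
          invFun := fun u => ⟨fun i => (u i).1, funext fun i => (u i).2⟩
          left_inv := fun v => Subtype.ext rfl
          right_inv := fun u => funext fun i => Subtype.ext rfl }
      rw [Nat.card_congr e, Nat.card_pi]
      simp only [hπ, SFcard_fiber_mk' m, hm]; simp
    rw [Finset.sum_congr rfl fun w _ => hfib w, Finset.sum_const, smul_eq_mul, mul_comm]
    congr 1
    rw [SFgenCount, Nat.card_eq_fintype_card, Fintype.card_subtype]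
  have hmap : ∀ A : Subgroup G, A.map π = ⊤ ↔ A ⊔ m = ⊤ := by
    intro A
    constructor
    · intro h
      have h2 := congrArg (Subgroup.comap π) h
      rwa [Subgroup.comap_map_eq, QuotientGroup.ker_mk', Subgroup.comap_top] at h2
    · intro h
      have hm0 : Subgroup.map π m = ⊥ := by
        apply le_bot_iff.1
        rintro x ⟨k, hk, rfl⟩
        exact Subgroup.mem_bot.2 ((QuotientGroup.eq_one_iff k).2 hk)
      calc Subgroup.map π A = Subgroup.map π A ⊔ ⊥ := (sup_bot_eq _).symm
        _ = Subgroup.map π A ⊔ Subgroup.map π m := by rw [hm0]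
        _ = Subgroup.map π (A ⊔ m) := (Subgroup.map_sup _ _ _).symm
        _ = ⊤ := by rw [h, Subgroup.map_top_of_surjective π hπs]
  have hiff : ∀ v : Fin s → G,
      Subgroup.closure (Set.range (π ∘ v)) = ⊤ ↔
        Subgroup.closure (Set.range v) ⊔ m = ⊤ := by
    intro v
    have h1 : Subgroup.closure (Set.range (π ∘ v)) =
        (Subgroup.closure (Set.range v)).map π := SFrange_comp_closure π v
    rw [h1, hmap]
  have e2 : {v : Fin s → G // Subgroup.closure (Set.range (π ∘ v)) = ⊤} ≃
      {v : Fin s → G // Subgroup.closure (Set.range v) ⊔ m = ⊤} :=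
    Equiv.subtypeEquivRight hiff
  have step3 : Nat.card {v : Fin s → G // Subgroup.closure (Set.range v) ⊔ m = ⊤} =
      ∑ A ∈ Finset.univ.filter (fun A : Subgroup G => A ⊔ m = ⊤),
        Nat.card {v : Fin s → G // Subgroup.closure (Set.range v) = A} :=
    SFcard_fiber (fun v : Fin s → G => Subgroup.closure (Set.range v)) (fun A => A ⊔ m = ⊤)
  have hmne : m ≠ ⊥ := by
    intro h
    rw [h, Subgroup.card_bot] at hm
    exact hp.one_lt.ne hm
  have hset : Finset.univ.filter (fun A : Subgroup G => A ⊔ m = ⊤)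
      = insert ⊤ (Finset.univ.filter fun A : Subgroup G => IsCompl A m) := by
    ext A
    simp only [Finset.mem_filter, Finset.mem_insert, Finset.mem_univ, true_and]
    constructor
    · intro h
      by_cases hA : A = ⊤
      · exact Or.inl hA
      · refine Or.inr ⟨?_, codisjoint_iff.2 h⟩
        rw [disjoint_iff]
        by_contra hne
        have hle : A ⊓ m ≤ m := inf_le_right
        have hdvd : Nat.card (A ⊓ m : Subgroup G) ∣ p := hm ▸ Subgroup.card_dvd_of_le hle
        rcases hp.eq_one_or_self_of_dvd _ hdvd with h1 | hp'
        · exact hne (Subgroup.eq_bot_of_card_eq _ h1)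
        · have heq : A ⊓ m = m := Subgroup.eq_of_le_of_card_ge hle (by rw [hp', hm])
          have hmA : m ≤ A := heq ▸ inf_le_left
          exact hA (by rw [← h, sup_eq_left.2 hmA])
    · rintro (rfl | hc)
      · exact top_sup_eq m
      · exact codisjoint_iff.1 hc.codisjoint
  have htopnot : (⊤ : Subgroup G) ∉ Finset.univ.filter (fun A : Subgroup G => IsCompl A m) := by
    simp only [Finset.mem_filter, Finset.mem_univ, true_and]
    intro hc
    apply hmne
    have := hc.inf_eq_bot
    rwa [top_inf_eq] at this
  have hiso : ∀ A : Subgroup G, IsCompl A m →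
      Nat.card {v : Fin s → G // Subgroup.closure (Set.range v) = A} =
        SFgenCount (G ⧸ m) s := by
    intro A hA
    rw [SFclCount_eq]
    refine SFgenCount_congr (MulEquiv.ofBijective (π.comp A.subtype) ⟨?_, ?_⟩) s
    · refine (injective_iff_map_eq_one _).2 fun a ha => ?_
      have h1 : (a : G) ∈ m := (QuotientGroup.eq_one_iff _).1 ha
      have h2 : (a : G) ∈ A ⊓ m := ⟨a.2, h1⟩
      rw [hA.inf_eq_bot] at h2
      exact Subtype.ext (Subgroup.mem_bot.1 h2)
    · intro y
      obtain ⟨g, hg⟩ := hπs y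
      have hgmem : g ∈ A ⊔ m := by rw [hA.sup_eq_top]; trivial
      obtain ⟨a, ha, k, hk, hak⟩ := Subgroup.mem_sup.1 hgmem
      refine ⟨⟨a, ha⟩, ?_⟩
      show π a = y
      have hk1 : π k = 1 := (QuotientGroup.eq_one_iff k).2 hk
      rw [← hg, ← hak, map_mul, hk1, mul_one]
  have hcardcompl : Nat.card {H : Subgroup G // IsCompl H m} =
      (Finset.univ.filter fun A : Subgroup G => IsCompl A m).card := by
    rw [Nat.card_eq_fintype_card, Fintype.card_subtype]
  calc p ^ s * SFgenCount (G ⧸ m) s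
      = Nat.card {v : Fin s → G // Subgroup.closure (Set.range (π ∘ v)) = ⊤} := step1.symm
    _ = Nat.card {v : Fin s → G // Subgroup.closure (Set.range v) ⊔ m = ⊤} := Nat.card_congr e2
    _ = ∑ A ∈ Finset.univ.filter (fun A : Subgroup G => A ⊔ m = ⊤),
        Nat.card {v : Fin s → G // Subgroup.closure (Set.range v) = A} := step3
    _ = SFgenCount G s + Nat.card {H : Subgroup G // IsCompl H m} * SFgenCount (G ⧸ m) s := by
        rw [hset, Finset.sum_insert htopnot, hcardcompl]
        congr 1
        rw [Finset.sum_congr rfl fun A hA => hiso A (Finset.mem_filter.1 hA).2,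
          Finset.sum_const, smul_eq_mul]

open Polynomial

/-- **Stanley's modular-element factorization** for the subgroup lattice of a finite
abelian `p`-group `G`: if `m ≤ G` has order `p` and `α` is the number of lattice
complements of `m` in `G`, then for every field `K` of characteristic zero and `t ∈ K`,
`∑_{A ≤ G} μ(A, ⊤) t^{ℓ(A)} = (t - α) · ∑_{B ≤ G/m} μ(B, ⊤) t^{ℓ(B)}`,
where `ℓ(H) = (Nat.card H).factorization p`. -/
theorem stanley_factorization_subgroup_lattice (p : ℕ) (hp : p.Prime)
    (G : Type*) [CommGroup G] [Finite G] (hG : IsPGroup p G)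
    (m : Subgroup G) (hm : Nat.card m = p)
    [Fintype (Subgroup G)] [DecidableEq (Subgroup G)] [LocallyFiniteOrder (Subgroup G)]
    [Fintype (Subgroup (G ⧸ m))] [DecidableEq (Subgroup (G ⧸ m))]
    [LocallyFiniteOrder (Subgroup (G ⧸ m))]
    (K : Type*) [Field K] [CharZero K] (t : K) :
    ∑ A : Subgroup G,
        ((IncidenceAlgebra.mu ℤ A (⊤ : Subgroup G) : ℤ) : K)
          * t ^ ((Nat.card A).factorization p) =
      (t - (Nat.card {H : Subgroup G // IsCompl H m} : K)) *
        ∑ B : Subgroup (G ⧸ m),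
          ((IncidenceAlgebra.mu ℤ B (⊤ : Subgroup (G ⧸ m)) : ℤ) : K)
            * t ^ ((Nat.card B).factorization p) := by
  classical
  haveI : Fact p.Prime := ⟨hp⟩
  have hGm : IsPGroup p (G ⧸ m) := IsPGroup.to_quotient hG m
  set α : ℕ := Nat.card {H : Subgroup G // IsCompl H m} with hα
  -- every subgroup's cardinality is the right power of p
  have hcardG : ∀ A : Subgroup G, Nat.card A = p ^ ((Nat.card A).factorization p) := by
    intro A
    obtain ⟨n, hn⟩ := IsPGroup.iff_card.1 (IsPGroup.to_subgroup hG A)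
    rw [hn, hp.factorization_pow, Finsupp.single_eq_same]
  have hcardQ : ∀ B : Subgroup (G ⧸ m), Nat.card B = p ^ ((Nat.card B).factorization p) := by
    intro B
    obtain ⟨n, hn⟩ := IsPGroup.iff_card.1 (IsPGroup.to_subgroup hGm B)
    rw [hn, hp.factorization_pow, Finsupp.single_eq_same]
  set F : ℤ[X] := ∑ A : Subgroup G,
    C (IncidenceAlgebra.mu ℤ A (⊤ : Subgroup G)) * X ^ ((Nat.card A).factorization p) with hF
  set F' : ℤ[X] := ∑ B : Subgroup (G ⧸ m),
    C (IncidenceAlgebra.mu ℤ B (⊤ : Subgroup (G ⧸ m))) * X ^ ((Nat.card B).factorization p)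
    with hF'
  have hevalF : ∀ s : ℕ, F.eval ((p : ℤ) ^ s) = (SFgenCount G s : ℤ) := by
    intro s
    rw [hF, eval_finset_sum, ← SFmu_sum_eq_genCount G s]
    refine Finset.sum_congr rfl fun A _ => ?_
    rw [eval_mul, eval_pow, eval_C, eval_X, ← pow_mul, mul_comm s, pow_mul]
    congr 2
    rw [← Nat.cast_pow, ← hcardG A]
  have hevalF' : ∀ s : ℕ, F'.eval ((p : ℤ) ^ s) = (SFgenCount (G ⧸ m) s : ℤ) := by
    intro s
    rw [hF', eval_finset_sum, ← SFmu_sum_eq_genCount (G ⧸ m) s]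
    refine Finset.sum_congr rfl fun B _ => ?_
    rw [eval_mul, eval_pow, eval_C, eval_X, ← pow_mul, mul_comm s, pow_mul]
    congr 2
    rw [← Nat.cast_pow, ← hcardQ B]
  have hkey : ∀ s : ℕ, F.eval ((p : ℤ) ^ s) =
      ((p : ℤ) ^ s - (α : ℤ)) * F'.eval ((p : ℤ) ^ s) := by
    intro s
    have h := SFkey_count hp m hm s
    have h2 := congrArg (Nat.cast : ℕ → ℤ) h
    push_cast at h2
    rw [hevalF, hevalF']
    linarith
  have hFeq : F = (X - C (α : ℤ)) * F' := by
    have hzero : F - (X - C (α : ℤ)) * F' = 0 := by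
      apply Polynomial.eq_zero_of_infinite_isRoot
      refine Set.infinite_of_injective_forall_mem
        (f := fun s : ℕ => (p : ℤ) ^ s) ?_ ?_
      · intro a b hab
        have : (p : ℤ) ^ a = (p : ℤ) ^ b := hab
        have h2 : p ^ a = p ^ b := by exact_mod_cast this
        exact Nat.pow_right_injective hp.two_le h2
      · intro s
        show IsRoot _ _
        rw [IsRoot, eval_sub, eval_mul, eval_sub, eval_X, eval_C, hkey s, sub_self]
    have := sub_eq_zero.1 hzero
    exact this
  -- now push to K
  have hfinal := congrArg (fun q : ℤ[X] => Polynomial.aeval t q) hFeq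
  simp only [hF, hF', map_sum, map_mul, map_sub, map_pow, aeval_C, aeval_X,
    algebraMap_int_eq, eq_intCast, map_intCast] at hfinal
  push_cast at hfinal ⊢
  exact hfinal
end

section
/- Let 𝒞 be an abelian category in which every object has only finitely many subobjects (i.e. Subobject z is finite for every object z). Let y be an object of 𝒞 and let m be a subobject of y whose underlying object is simple. Then the number of subobjects w of y with IsCompl w m in the lattice Subobject y is either 0 or a power Nat.card(End M)^k for some natural number k, where M denotes the underlying object of m and End M its endomorphism monoid. -/
open CategoryTheory CategoryTheory.Limits

section Aux

variable {C : Type*} [Category C] [Abelian C]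

/-- If every object has finitely many subobjects, then all hom sets are finite,
via the graph embedding `f ↦ mk (biprod.lift (𝟙 X) f)`. -/
lemma hom_finite_of_subobject_finite (hfin : ∀ z : C, Finite (Subobject z)) (X M : C) :
    Finite (X ⟶ M) := by
  haveI : ∀ f : X ⟶ M, Mono (biprod.lift (𝟙 X) f) := fun f =>
    mono_of_mono_fac (biprod.lift_fst (𝟙 X) f)
  have hinj : Function.Injective
      (fun f : X ⟶ M => Subobject.mk (biprod.lift (𝟙 X) f)) := by
    intro f g h
    dsimp at h
    have e := Subobject.ofMkLEMk_comp (le_of_eq h)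
    have h1 : Subobject.ofMkLEMk _ _ (le_of_eq h) = 𝟙 X := by
      have h1' := congrArg (fun t => t ≫ (biprod.fst : X ⊞ M ⟶ X)) e
      simp only [Category.assoc, biprod.lift_fst, Category.comp_id] at h1'
      exact h1'
    have h2 := congrArg (fun t => t ≫ (biprod.snd : X ⊞ M ⟶ M)) e
    simp only [Category.assoc, biprod.lift_snd, h1, Category.id_comp] at h2
    exact h2.symm
  exact Finite.of_injective _ hinj

/-- The kernel of a retraction of a subobject `m` is a lattice complement of `m`. -/
lemma isCompl_kernelSubobject_of_retraction {y : C} (m : Subobject y) (r : y ⟶ (m : C))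
    (hr : m.arrow ≫ r = 𝟙 (m : C)) : IsCompl (kernelSubobject r) m := by
  apply IsCompl.of_eq
  · -- inf is ⊥
    set P := kernelSubobject r ⊓ m with hP
    have harr1 : Subobject.ofLE P (kernelSubobject r) inf_le_left ≫
        (kernelSubobject r).arrow = P.arrow := Subobject.ofLE_arrow _
    have harr2 : Subobject.ofLE P m inf_le_right ≫ m.arrow = P.arrow :=
      Subobject.ofLE_arrow _
    have h0 : P.arrow ≫ r = 0 := by
      rw [← harr1, Category.assoc, kernelSubobject_arrow_comp, comp_zero]
    have h1 : P.arrow ≫ r = Subobject.ofLE P m inf_le_right := by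
      rw [← harr2, Category.assoc, hr, Category.comp_id]
    have h2 : P.arrow = 0 := by
      rw [← harr2, ← h1, h0, zero_comp]
    rw [← Subobject.mk_arrow P, Subobject.mk_eq_bot_iff_zero]
    exact h2
  · -- sup is ⊤
    have hf : (kernelSubobject r ⊔ m).Factors (𝟙 y) := by
      have hdecomp : (𝟙 y : y ⟶ y) = (𝟙 y - r ≫ m.arrow) + r ≫ m.arrow := by abel
      rw [hdecomp]
      apply Subobject.factors_add
      · refine Subobject.factors_of_le _ le_sup_left (kernelSubobject_factors r _ ?_)
        rw [Preadditive.sub_comp, Category.id_comp, Category.assoc, hr, Category.comp_id,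
          sub_self]
      · exact Subobject.factors_of_le _ le_sup_right (Subobject.factors_comp_arrow r)
    haveI : IsSplitEpi (kernelSubobject r ⊔ m).arrow :=
      ⟨⟨⟨_, Subobject.factorThru_arrow _ _ hf⟩⟩⟩
    haveI : IsIso (kernelSubobject r ⊔ m).arrow :=
      isIso_of_mono_of_epi _
    exact Subobject.eq_top_of_isIso_arrow _

end Aux

/-- In an abelian category whose every object has only finitely many subobjects, the
number of lattice complements of a simple subobject `m` of an object `y` is either `0`
or a power of the cardinality of the endomorphism ring of (the underlying object of)
`m`. -/
theorem card_complements_of_simple_subobject (C : Type*) [Category C] [Abelian C]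
    (hfin : ∀ z : C, Finite (Subobject z)) (y : C) (m : Subobject y)
    (hm : Simple (m : C)) :
    Nat.card {w : Subobject y // IsCompl w m} = 0 ∨
      ∃ k : ℕ, Nat.card {w : Subobject y // IsCompl w m} = Nat.card (End (m : C)) ^ k := by
  classical
  haveI := hm
  -- the set of retractions of `m.arrow`
  let R := {r : y ⟶ (m : C) // m.arrow ≫ r = 𝟙 (m : C)}
  let Φ : R → {w : Subobject y // IsCompl w m} := fun r =>
    ⟨kernelSubobject r.1, isCompl_kernelSubobject_of_retraction m r.1 r.2⟩
  have hΦinj : Function.Injective Φ := by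
    rintro r₁ r₂ h
    have hk : kernelSubobject r₁.1 = kernelSubobject r₂.1 := congrArg Subtype.val h
    have h0 : (kernelSubobject r₁.1).arrow ≫ r₂.1 = 0 := by
      rw [hk]; exact kernelSubobject_arrow_comp _
    have hf : (kernelSubobject r₁.1).Factors (𝟙 y - r₁.1 ≫ m.arrow) := by
      apply kernelSubobject_factors
      rw [Preadditive.sub_comp, Category.id_comp, Category.assoc, r₁.2, Category.comp_id,
        sub_self]
    have e1 : (𝟙 y - r₁.1 ≫ m.arrow) ≫ r₂.1 = 0 := by
      rw [← Subobject.factorThru_arrow _ _ hf, Category.assoc, h0, comp_zero]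
    have : r₂.1 = r₁.1 := by
      calc r₂.1 = (𝟙 y - r₁.1 ≫ m.arrow) ≫ r₂.1 + (r₁.1 ≫ m.arrow) ≫ r₂.1 := by
            rw [← Preadditive.add_comp, sub_add_cancel, Category.id_comp]
        _ = r₁.1 := by rw [e1, zero_add, Category.assoc, r₂.2, Category.comp_id]
    exact Subtype.ext this.symm
  have hΦsurj : Function.Surjective Φ := by
    rintro ⟨w, hw⟩
    set c := cokernel.π w.arrow with hc
    have hwc : w.arrow ≫ c = 0 := cokernel.condition _
    have hker : kernelSubobject c = w := by
      apply le_antisymm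
      · exact Subobject.le_of_comm
          (Abelian.monoLift w.arrow (kernelSubobject c).arrow
            (kernelSubobject_arrow_comp c))
          (Abelian.monoLift_comp _ _ _)
      · exact le_kernelSubobject _ _ hwc
    haveI hmono : Mono (m.arrow ≫ c) := by
      apply Preadditive.mono_of_cancel_zero
      intro Z g hg
      have hg' : (g ≫ m.arrow) ≫ c = 0 := by rw [Category.assoc]; exact hg
      have hwf : w.Factors (g ≫ m.arrow) :=
        (Abelian.monoLift_comp w.arrow (g ≫ m.arrow) hg') ▸
          Subobject.factors_comp_arrow (Abelian.monoLift w.arrow (g ≫ m.arrow) hg')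
      have hmf : m.Factors (g ≫ m.arrow) := Subobject.factors_comp_arrow g
      have hbot : (⊥ : Subobject y).Factors (g ≫ m.arrow) := by
        rw [← hw.inf_eq_bot]
        exact (Subobject.inf_factors _).mpr ⟨hwf, hmf⟩
      have hz : g ≫ m.arrow = 0 := (Subobject.bot_factors_iff_zero _).mp hbot
      exact (cancel_mono m.arrow).mp (by rw [hz, zero_comp])
    haveI hepi : Epi (m.arrow ≫ c) := by
      apply Preadditive.epi_of_cancel_zero
      intro Z h hh
      have hm' : m ≤ kernelSubobject (c ≫ h) :=
        le_kernelSubobject _ _ (by rw [← Category.assoc]; exact hh)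
      have hw' : w ≤ kernelSubobject (c ≫ h) :=
        le_kernelSubobject _ _ (by rw [← Category.assoc, hwc, zero_comp])
      have htop : kernelSubobject (c ≫ h) = ⊤ :=
        top_le_iff.mp (hw.sup_eq_top ▸ sup_le hw' hm')
      have harr := kernelSubobject_arrow_comp (c ≫ h)
      rw [htop] at harr
      have h0 : c ≫ h = 0 := (cancel_epi (⊤ : Subobject y).arrow).mp
        (by rw [harr, comp_zero])
      exact zero_of_epi_comp c h0
    haveI : IsIso (m.arrow ≫ c) := isIso_of_mono_of_epi _
    refine ⟨⟨c ≫ inv (m.arrow ≫ c), by rw [← Category.assoc, IsIso.hom_inv_id]⟩, ?_⟩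
    apply Subtype.ext
    show kernelSubobject (c ≫ inv (m.arrow ≫ c)) = w
    rw [kernelSubobject_comp_mono, hker]
  have hcard : Nat.card {w : Subobject y // IsCompl w m} = Nat.card R :=
    (Nat.card_eq_of_bijective Φ ⟨hΦinj, hΦsurj⟩).symm
  rcases isEmpty_or_nonempty R with hR | hR
  · left
    rw [hcard]
    exact Nat.card_of_isEmpty
  · right
    obtain ⟨r₀⟩ := hR
    -- retractions form a torsor under `Hom(cokernel m.arrow, m)`
    let e : (cokernel m.arrow ⟶ (m : C)) ≃ R :=
      { toFun := fun t => ⟨r₀.1 + cokernel.π m.arrow ≫ t, by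
          rw [Preadditive.comp_add, r₀.2, ← Category.assoc, cokernel.condition, zero_comp,
            add_zero]⟩
        invFun := fun r => cokernel.desc m.arrow (r.1 - r₀.1)
          (by rw [Preadditive.comp_sub, r.2, r₀.2, sub_self])
        left_inv := fun t => by
          apply (cancel_epi (cokernel.π m.arrow)).mp
          rw [cokernel.π_desc, add_sub_cancel_left]
        right_inv := fun r => Subtype.ext (by
          dsimp only
          rw [cokernel.π_desc, add_sub_cancel]) }
    haveI : Finite (cokernel m.arrow ⟶ (m : C)) :=
      hom_finite_of_subobject_finite hfin _ _
    haveI : Finite (End (m : C)) := hom_finite_of_subobject_finite hfin _ _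
    haveI := Fintype.ofFinite (cokernel m.arrow ⟶ (m : C))
    haveI := Fintype.ofFinite (End (m : C))
    refine ⟨Module.finrank (End (m : C)) (cokernel m.arrow ⟶ (m : C)), ?_⟩
    rw [hcard, ← Nat.card_congr e, Nat.card_eq_fintype_card, Nat.card_eq_fintype_card,
      Module.card_eq_pow_finrank (K := End (m : C)) (V := (cokernel m.arrow ⟶ (m : C)))]
end

section
/- Let 𝒞 be an abelian category in which every object has only finitely many subobjects, i.e. Subobject z is a finite type for every object z of 𝒞. Then for all objects x, y of 𝒞 the Hom-group (x ⟶ y) is finite. -/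
open CategoryTheory CategoryTheory.Limits

/-- In an abelian category in which every object has only finitely many subobjects,
all Hom-groups are finite. -/
theorem hom_finite_of_finitely_many_subobjects (C : Type*) [Category C] [Abelian C]
    (hfin : ∀ z : C, Finite (Subobject z)) (x y : C) :
    Finite (x ⟶ y) := by
  have : ∀ f : x ⟶ y, Mono (biprod.lift (𝟙 x) f) := fun f =>
    mono_of_mono_fac (show biprod.lift (𝟙 x) f ≫ biprod.fst = 𝟙 x by simp)
  have key : Function.Injective
      (fun f : x ⟶ y => Subobject.mk (biprod.lift (𝟙 x) f)) := by
    intro f g h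
    dsimp at h
    have hi : Subobject.ofMkLEMk _ _ h.le ≫ biprod.lift (𝟙 x) g = biprod.lift (𝟙 x) f :=
      Subobject.ofMkLEMk_comp h.le
    have h1 : Subobject.ofMkLEMk (biprod.lift (𝟙 x) f) (biprod.lift (𝟙 x) g) h.le = 𝟙 x := by
      have h1' := congrArg (· ≫ biprod.fst) hi
      simp only [Category.assoc, biprod.lift_fst, Category.comp_id] at h1'
      exact h1'
    have h2 := congrArg (· ≫ biprod.snd) hi
    simp [h1] at h2
    exact h2.symm
  exact Finite.of_injective _ key
end

section
/- Let 𝒞 be an abelian category in which every object has only finitely many subobjects (Subobject z finite for every z), and let m be a simple object of 𝒞. Then the endomorphism ring End m = (m ⟶ m) is finite and commutative, i.e. End m is finite and f * g = g * f for all f, g ∈ End m; hence End m is a finite field. -/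
open CategoryTheory

/-- In an abelian category in which every object has only finitely many subobjects, the
endomorphism ring of a simple object `m` is finite and commutative (hence, being a
division ring by Schur's lemma, a finite field). -/
theorem end_of_simple_finite_and_comm (C : Type*) [Category C] [Abelian C]
    (hfin : ∀ z : C, Finite (Subobject z)) (m : C) (hm : Simple m) :
    Finite (End m) ∧ ∀ f g : End m, f * g = g * f := by
  have hmono : ∀ f : End m, Mono (Limits.biprod.lift (𝟙 m) f) := fun f =>
    mono_of_mono_fac (Limits.biprod.lift_fst (𝟙 m) f)
  haveI : ∀ f : End m, Mono (Limits.biprod.lift (𝟙 m) f) := hmono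
  have hinj : Function.Injective
      (fun f : End m => Subobject.mk (Limits.biprod.lift (𝟙 m) f)) := by
    intro f g h
    dsimp at h
    have := Subobject.ofMkLEMk_comp h.le
    have h1 := congrArg (· ≫ Limits.biprod.fst) this
    have h2 := congrArg (· ≫ Limits.biprod.snd) this
    simp only [Category.assoc, Limits.biprod.lift_fst, Limits.biprod.lift_snd,
      Category.comp_id] at h1 h2
    rw [h1, Category.id_comp] at h2
    exact h2.symm
  have hfinEnd : Finite (End m) := Finite.of_injective _ hinj
  refine ⟨hfinEnd, fun f g => ?_⟩
  letI : DivisionRing (End m) := inferInstance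
  letI : Field (End m) := littleWedderburn _
  exact mul_comm f g
end

section
/- Let R be a ring and let M and N be R-modules, both of finite length l (Module.length R M = Module.length R N = l for a natural number l). Let C be an R-module and f : C →ₗ[R] M, g : C →ₗ[R] N linear maps. Then the following are equivalent: (i) there exists a linear equivalence e : M ≃ₗ[R] N such that the range of the map f.prod g : C →ₗ[R] M × N equals the graph of e; (ii) the quotient module C ⧸ (ker f ⊔ ker g) has length l. -/
/-- The (Jordan–Hölder) length of an `R`-module `M`: the Krull dimension of its
lattice of submodules, i.e. the supremum of the lengths of chains of submodules. -/
noncomputable def Module.length' (R M : Type*) [Ring R] [AddCommGroup M] [Module R M] :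
    WithBot ℕ∞ :=
  Order.krullDim (Submodule R M)

section aux

variable {R M N C : Type*} [Ring R]
    [AddCommGroup M] [Module R M] [AddCommGroup N] [Module R N]
    [AddCommGroup C] [Module R C]

lemma length_eq_of_equiv (e : M ≃ₗ[R] N) : Module.length' R M = Module.length' R N :=
  Order.krullDim_eq_of_orderIso (Submodule.orderIsoMapComap e)

lemma exists_ltSeries {α : Type*} [Preorder α] (l : ℕ) (h : Order.krullDim α = (l : ℕ∞)) :
    ∃ p : LTSeries α, l ≤ p.length := by
  have hne : Nonempty α := by
    by_contra hempty
    rw [not_nonempty_iff] at hempty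
    rw [Order.krullDim_eq_bot_iff.mpr hempty] at h
    exact absurd h (by simp)
  rw [Order.krullDim_eq_iSup_length] at h
  rw [show ((l : ℕ∞) : WithBot ℕ∞) = ((l : ℕ) : WithBot ℕ∞) by rfl] at h
  have h' : (⨆ (p : LTSeries α), (p.length : ℕ∞)) = (l : ℕ∞) := by exact_mod_cast h
  by_contra hc
  push_neg at hc
  rcases Nat.eq_zero_or_pos l with rfl | hl
  · exact absurd (Nat.zero_le _) (not_le.2 (hc (LTSeries.mk 0 (fun _ => Classical.arbitrary α)
      (fun i j hij => absurd hij (by omega)))))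
  · have : (⨆ (p : LTSeries α), (p.length : ℕ∞)) ≤ ((l - 1 : ℕ) : ℕ∞) := by
      apply iSup_le
      intro p
      exact_mod_cast Nat.le_sub_one_of_lt (hc p)
    rw [h'] at this
    have : l ≤ l - 1 := by exact_mod_cast this
    omega

lemma le_of_map_le (f : C →ₗ[R] M) {A B : Submodule R C} (hB : LinearMap.ker f ≤ B)
    (h : A.map f ≤ B.map f) : A ≤ B := by
  intro a ha
  obtain ⟨b, hb, hfb⟩ := h (Submodule.mem_map_of_mem ha)
  have : a - b ∈ LinearMap.ker f := by
    simp [LinearMap.mem_ker, map_sub, hfb]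
  have := B.add_mem (hB this) hb
  simpa using this

/-- Key step: if the core has length `l` and `M` has length `l`, then
`f` kills `ker g` into `⊥` (i.e. `ker g ≤ ker f`) and `f` is surjective. -/
lemma aux_step (l : ℕ) (hM : Module.length' R M = l)
    (f : C →ₗ[R] M) (g : C →ₗ[R] N)
    (h : Module.length' R (C ⧸ (LinearMap.ker f ⊔ LinearMap.ker g)) = l) :
    LinearMap.ker g ≤ LinearMap.ker f ∧ LinearMap.range f = ⊤ := by
  set K : Submodule R C := LinearMap.ker f ⊔ LinearMap.ker g with hK
  obtain ⟨p, hp⟩ := exists_ltSeries l h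
  set Φ : Submodule R (C ⧸ K) → Submodule R M :=
    fun P => (P.comap K.mkQ).map f with hΦdef
  have hKle : ∀ P : Submodule R (C ⧸ K), K ≤ P.comap K.mkQ := by
    intro P
    intro x hx
    simp [Submodule.mem_comap, (Submodule.Quotient.mk_eq_zero K).2 hx,
      Submodule.mkQ_apply]
  have hker : ∀ P : Submodule R (C ⧸ K), LinearMap.ker f ≤ P.comap K.mkQ :=
    fun P => le_trans le_sup_left (hKle P)
  have hΦmono : Monotone Φ := fun P Q hPQ => Submodule.map_mono (Submodule.comap_mono hPQ)
  have hΦinj : Function.Injective Φ := by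
    intro P Q hPQ
    have h1 : P.comap K.mkQ = Q.comap K.mkQ :=
      le_antisymm (le_of_map_le f (hker Q) (le_of_eq hPQ))
        (le_of_map_le f (hker P) (le_of_eq hPQ.symm))
    have := congrArg (Submodule.map K.mkQ) h1
    rwa [Submodule.map_comap_eq_of_surjective K.mkQ_surjective,
      Submodule.map_comap_eq_of_surjective K.mkQ_surjective] at this
  have hΦstrict : StrictMono Φ := hΦmono.strictMono_of_injective hΦinj
  have hbnd_lo : ∀ P : Submodule R (C ⧸ K), (LinearMap.ker g).map f ≤ Φ P := by
    intro P
    calc (LinearMap.ker g).map f ≤ K.map f := Submodule.map_mono le_sup_right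
    _ ≤ Φ P := Submodule.map_mono (hKle P)
  have hbnd_hi : ∀ P : Submodule R (C ⧸ K), Φ P ≤ LinearMap.range f := by
    intro P
    rw [hΦdef]
    rintro x ⟨c, _, rfl⟩
    exact ⟨c, rfl⟩
  set q : LTSeries (Submodule R M) := p.map Φ hΦstrict with hq
  have hqlen : q.length = p.length := rfl
  have hcontr : ∀ r : LTSeries (Submodule R M), r.length ≤ l := by
    intro r
    have h1 := Order.LTSeries.length_le_krullDim r
    rw [show Order.krullDim (Submodule R M) = Module.length' R M from rfl, hM] at h1
    exact_mod_cast h1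
  constructor
  · -- ker g ≤ ker f, via map f (ker g) = ⊥
    have hbot : (LinearMap.ker g).map f = ⊥ := by
      by_contra hb
      have hlt : (⊥ : Submodule R M) < q.head := by
        rw [bot_lt_iff_ne_bot]
        intro hh
        exact hb (le_bot_iff.1 (hh ▸ hbnd_lo p.head))
      have := hcontr (q.cons ⊥ hlt)
      rw [RelSeries.cons_length, hqlen] at this
      omega
    intro x hx
    have : f x ∈ (LinearMap.ker g).map f := Submodule.mem_map_of_mem hx
    rw [hbot] at this
    simpa [LinearMap.mem_ker] using this
  · -- range f = ⊤
    by_contra hb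
    have hlt : q.last < (⊤ : Submodule R M) := by
      rw [lt_top_iff_ne_top]
      intro hh
      exact hb (top_le_iff.1 (hh ▸ hbnd_hi p.last))
    have := hcontr (q.snoc ⊤ hlt)
    rw [RelSeries.snoc_length, hqlen] at this
    omega

end aux

/-- Let `M`, `N` be `R`-modules of the same finite length `l` and let
`(C; f, g)` be a correspondence between them. Then the range of `f.prod g` is the graph
of an isomorphism `M ≃ N` if and only if the core `C ⧸ (ker f ⊔ ker g)` of the
correspondence has length `l`. -/
theorem correspondence_isom_iff_core_length (R M N C : Type*) [Ring R]
    [AddCommGroup M] [Module R M] [AddCommGroup N] [Module R N]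
    [AddCommGroup C] [Module R C] (l : ℕ)
    (hM : Module.length' R M = l) (hN : Module.length' R N = l)
    (f : C →ₗ[R] M) (g : C →ₗ[R] N) :
    (∃ e : M ≃ₗ[R] N, LinearMap.range (f.prod g) = LinearMap.graph (e : M →ₗ[R] N)) ↔
      Module.length' R (C ⧸ (LinearMap.ker f ⊔ LinearMap.ker g)) = l := by
  constructor
  · rintro ⟨e, he⟩
    -- g = e ∘ f
    have hge : ∀ c : C, g c = e (f c) := by
      intro c
      have : (f c, g c) ∈ LinearMap.range (f.prod g) := ⟨c, rfl⟩
      rw [he, LinearMap.mem_graph_iff] at this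
      exact this
    have hker : LinearMap.ker f ≤ LinearMap.ker g := by
      intro c hc
      rw [LinearMap.mem_ker] at hc ⊢
      rw [hge c, hc, map_zero]
    have hgsurj : Function.Surjective g := by
      intro n
      have : (e.symm n, n) ∈ LinearMap.graph (e : M →ₗ[R] N) := by
        rw [LinearMap.mem_graph_iff]
        simp
      rw [← he] at this
      obtain ⟨c, hc⟩ := this
      exact ⟨c, congrArg Prod.snd hc⟩
    rw [sup_eq_right.2 hker]
    rw [length_eq_of_equiv (g.quotKerEquivOfSurjective hgsurj)]
    exact hN
  · intro h
    obtain ⟨hgf, hfsurj⟩ := aux_step l hM f g h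
    have h' : Module.length' R (C ⧸ (LinearMap.ker g ⊔ LinearMap.ker f)) = l := by
      rw [← h, length_eq_of_equiv (Submodule.quotEquivOfEq _ _ (sup_comm _ _))]
    obtain ⟨hfg, hgsurj⟩ := aux_step l hN g f h'
    have hkeq : LinearMap.ker f = LinearMap.ker g := le_antisymm hfg hgf
    have hfsurj' : Function.Surjective f := LinearMap.range_eq_top.1 hfsurj
    have hgsurj' : Function.Surjective g := LinearMap.range_eq_top.1 hgsurj
    set e : M ≃ₗ[R] N :=
      (f.quotKerEquivOfSurjective hfsurj').symm.trans
        ((Submodule.quotEquivOfEq _ _ hkeq).trans (g.quotKerEquivOfSurjective hgsurj'))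
    have hke : ∀ c : C, e (f c) = g c := by
      intro c
      have h1 : (f.quotKerEquivOfSurjective hfsurj').symm (f c) =
          Submodule.Quotient.mk c := by
        apply (f.quotKerEquivOfSurjective hfsurj').injective
        simp [LinearMap.quotKerEquivOfSurjective, LinearMap.quotKerEquivRange_apply_mk]
      show ((Submodule.quotEquivOfEq _ _ hkeq).trans (g.quotKerEquivOfSurjective hgsurj'))
          ((f.quotKerEquivOfSurjective hfsurj').symm (f c)) = g c
      rw [h1]
      simp [LinearMap.quotKerEquivOfSurjective, Submodule.quotEquivOfEq_mk,
        LinearMap.quotKerEquivRange_apply_mk]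
    refine ⟨e, le_antisymm ?_ ?_⟩
    · rintro ⟨m, n⟩ ⟨c, hc⟩
      rw [LinearMap.mem_graph_iff]
      obtain ⟨hm, hn⟩ := Prod.mk.injEq .. ▸ hc
      simp only [LinearMap.prod_apply, Pi.prod, Prod.mk.injEq] at hc
      obtain ⟨hm, hn⟩ := hc
      rw [← hm, ← hn]
      exact (hke c).symm
    · rintro ⟨m, n⟩ hmn
      rw [LinearMap.mem_graph_iff] at hmn
      obtain ⟨c, rfl⟩ := hfsurj' m
      have hn : g c = n := (hke c).symm.trans hmn.symm
      exact ⟨c, by simp [LinearMap.prod_apply, hn]⟩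
end

section
/- Let R be a ring and let X, Y, Z, D, E be R-modules with Z of finite length. Let g₁ : D →ₗ[R] X, g₂ : D →ₗ[R] Z, h₁ : E →ₗ[R] Z, h₂ : E →ₗ[R] Y be linear maps. Let P be the pullback submodule {(d, e) ∈ D × E : g₂ d = h₁ e}, and let p₁ : P →ₗ[R] X, p₂ : P →ₗ[R] Y be the maps (d,e) ↦ g₁ d and (d,e) ↦ h₂ e. Then Module.length R (P ⧸ (ker p₁ ⊔ ker p₂)) ≤ Module.length R Z. -/
/-- The (Jordan–Hölder) length of an `R`-module `M`: the Krull dimension of its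
lattice of submodules, i.e. the supremum of the lengths of chains of submodules. -/
noncomputable def Module.lengthKrull (R M : Type*) [Ring R] [AddCommGroup M] [Module R M] :
    WithBot ℕ∞ :=
  Order.krullDim (Submodule R M)

/-- If the composite of two correspondences `(D; g₁, g₂)` (from `X` to `Z`) and
`(E; h₁, h₂)` (from `Z` to `Y`) is formed on the pullback `P = D ×_Z E`, then the
length of the core of the composite correspondence is at most the length of `Z`. -/
theorem length_core_comp_le (R X Y Z D E : Type*) [Ring R]
    [AddCommGroup X] [Module R X] [AddCommGroup Y] [Module R Y]
    [AddCommGroup Z] [Module R Z] [AddCommGroup D] [Module R D]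
    [AddCommGroup E] [Module R E]
    (hZ : Module.lengthKrull R Z ≠ ⊤)
    (g₁ : D →ₗ[R] X) (g₂ : D →ₗ[R] Z) (h₁ : E →ₗ[R] Z) (h₂ : E →ₗ[R] Y)
    (P : Submodule R (D × E)) (hP : ∀ de : D × E, de ∈ P ↔ g₂ de.1 = h₁ de.2)
    (p₁ : P →ₗ[R] X) (hp₁ : ∀ de : P, p₁ de = g₁ (de : D × E).1)
    (p₂ : P →ₗ[R] Y) (hp₂ : ∀ de : P, p₂ de = h₂ (de : D × E).2) :
    Module.lengthKrull R (P ⧸ (LinearMap.ker p₁ ⊔ LinearMap.ker p₂)) ≤ Module.lengthKrull R Z := by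
  set K := LinearMap.ker p₁ ⊔ LinearMap.ker p₂ with hK
  set q : P →ₗ[R] Z := g₂ ∘ₗ (LinearMap.fst R D E) ∘ₗ P.subtype with hq
  have hker : LinearMap.ker q ≤ K := by
    intro x hx
    have hx1 : g₂ (x : D × E).1 = 0 := hx
    have hx2 : h₁ (x : D × E).2 = 0 := by rw [← (hP x).mp x.2, hx1]
    have ha : ((x : D × E).1, (0 : E)) ∈ P := by rw [hP]; simpa using hx1
    have hb : ((0 : D), (x : D × E).2) ∈ P := by rw [hP]; simpa using hx2.symm
    have hxsum : x = (⟨_, ha⟩ : P) + ⟨_, hb⟩ := by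
      apply Subtype.ext
      simp [Prod.ext_iff]
    rw [hxsum]
    refine add_mem (Submodule.mem_sup_right ?_) (Submodule.mem_sup_left ?_)
    · simp [LinearMap.mem_ker, hp₂]
    · simp [LinearMap.mem_ker, hp₁]
  have hF : StrictMono (fun S : Submodule R (P ⧸ K) =>
      Submodule.map q (Submodule.comap K.mkQ S)) := by
    intro S T hST
    have h1 : Submodule.comap K.mkQ S < Submodule.comap K.mkQ T := by
      refine lt_of_le_of_ne (Submodule.comap_mono hST.le) ?_
      intro h
      apply hST.ne
      have := congrArg (Submodule.map K.mkQ) h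
      rwa [Submodule.map_comap_eq_of_surjective K.mkQ_surjective,
        Submodule.map_comap_eq_of_surjective K.mkQ_surjective] at this
    have hKle : ∀ U : Submodule R (P ⧸ K), LinearMap.ker q ≤ Submodule.comap K.mkQ U := by
      intro U
      refine le_trans hker fun x hx => ?_
      have : K.mkQ x = 0 := (Submodule.Quotient.mk_eq_zero K).mpr hx
      simp [Submodule.mem_comap, this]
    have hKS := hKle S
    have hKT := hKle T
    refine lt_of_le_of_ne (Submodule.map_mono h1.le) ?_
    intro h
    apply h1.ne
    have := congrArg (Submodule.comap q) h
    rwa [Submodule.comap_map_eq, Submodule.comap_map_eq, sup_eq_left.mpr hKS,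
      sup_eq_left.mpr hKT] at this
  exact Order.krullDim_le_of_strictMono _ hF
end

section
/- Let F be a field and let X, Y, Z be finite-dimensional F-vector spaces. Let (C; f : C →ₗ[F] X, g : C →ₗ[F] Y) and (C'; f' : C' →ₗ[F] X, g' : C' →ₗ[F] Y) be correspondences with range (f.prod g) = range (f'.prod g') and finrank F (ker (f.prod g)) = finrank F (ker (f'.prod g')), where C, C' are finite-dimensional. Let (D; h : D →ₗ[F] Y, k : D →ₗ[F] Z) be a further correspondence with D finite-dimensional. Form the pullbacks P = {(c,d) : g c = h d} ≤ C × D and P' = {(c',d) : g' c' = h d} ≤ C' × D, with composite maps u₁ : P → X, (c,d) ↦ f c, u₂ : P → Z, (c,d) ↦ k d, and likewise u₁', u₂' on P'. Then range (u₁.prod u₂) = range (u₁'.prod u₂') and finrank F (ker (u₁.prod u₂)) = finrank F (ker (u₁'.prod u₂')). -/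
open Module

/-- Auxiliary: range of `(c,d) ↦ a c - b d` is `range a ⊔ range b`. -/
theorem range_sub_comp_fst_snd (F : Type*) [Field F] {W D Y : Type*}
    [AddCommGroup W] [Module F W] [AddCommGroup D] [Module F D]
    [AddCommGroup Y] [Module F Y] (a : W →ₗ[F] Y) (b : D →ₗ[F] Y) :
    LinearMap.range ((a.comp (LinearMap.fst F W D)) - (b.comp (LinearMap.snd F W D)))
      = LinearMap.range a ⊔ LinearMap.range b := by
  apply le_antisymm
  · rintro y ⟨⟨c, d⟩, rfl⟩
    simp only [LinearMap.sub_apply, LinearMap.comp_apply, LinearMap.fst_apply,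
      LinearMap.snd_apply]
    exact Submodule.sub_mem _ (Submodule.mem_sup_left ⟨c, rfl⟩)
      (Submodule.mem_sup_right ⟨d, rfl⟩)
  · intro y hy
    rw [Submodule.mem_sup] at hy
    obtain ⟨y1, ⟨c, rfl⟩, y2, ⟨d, rfl⟩, rfl⟩ := hy
    exact ⟨(c, -d), by simp⟩

/-- Composition of correspondences between finite-dimensional vector spaces is well
defined on equivalence classes: if the correspondences `(C; f, g)` and `(C'; f', g')`
from `X` to `Y` have the same image in `X × Y` and kernels of the same dimension, then
their composites with a further correspondence `(D; h, k)` from `Y` to `Z`, formed on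
the pullbacks `P = C ×_Y D` and `P' = C' ×_Y D`, again have the same image in `X × Z`
and kernels of the same dimension. -/
theorem comp_correspondence_well_defined (F : Type*) [Field F]
    (X Y Z C C' D : Type*)
    [AddCommGroup X] [Module F X] [FiniteDimensional F X]
    [AddCommGroup Y] [Module F Y] [FiniteDimensional F Y]
    [AddCommGroup Z] [Module F Z] [FiniteDimensional F Z]
    [AddCommGroup C] [Module F C] [FiniteDimensional F C]
    [AddCommGroup C'] [Module F C'] [FiniteDimensional F C']
    [AddCommGroup D] [Module F D] [FiniteDimensional F D]
    (f : C →ₗ[F] X) (g : C →ₗ[F] Y) (f' : C' →ₗ[F] X) (g' : C' →ₗ[F] Y)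
    (hrange : LinearMap.range (f.prod g) = LinearMap.range (f'.prod g'))
    (hker : finrank F (LinearMap.ker (f.prod g)) = finrank F (LinearMap.ker (f'.prod g')))
    (h : D →ₗ[F] Y) (k : D →ₗ[F] Z)
    (P : Submodule F (C × D)) (hP : ∀ cd : C × D, cd ∈ P ↔ g cd.1 = h cd.2)
    (P' : Submodule F (C' × D)) (hP' : ∀ cd : C' × D, cd ∈ P' ↔ g' cd.1 = h cd.2)
    (u₁ : P →ₗ[F] X) (hu₁ : ∀ cd : P, u₁ cd = f (cd : C × D).1)
    (u₂ : P →ₗ[F] Z) (hu₂ : ∀ cd : P, u₂ cd = k (cd : C × D).2)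
    (u₁' : P' →ₗ[F] X) (hu₁' : ∀ cd : P', u₁' cd = f' (cd : C' × D).1)
    (u₂' : P' →ₗ[F] Z) (hu₂' : ∀ cd : P', u₂' cd = k (cd : C' × D).2) :
    LinearMap.range (u₁.prod u₂) = LinearMap.range (u₁'.prod u₂') ∧
      finrank F (LinearMap.ker (u₁.prod u₂)) = finrank F (LinearMap.ker (u₁'.prod u₂')) := by
  -- ranges of g and g' agree
  have hg_range : LinearMap.range g = LinearMap.range g' := by
    have h1 : LinearMap.range g
        = Submodule.map (LinearMap.snd F X Y) (LinearMap.range (f.prod g)) := by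
      rw [← LinearMap.range_comp]; congr 1
    have h2 : LinearMap.range g'
        = Submodule.map (LinearMap.snd F X Y) (LinearMap.range (f'.prod g')) := by
      rw [← LinearMap.range_comp]; congr 1
    rw [h1, h2, hrange]
  -- range part
  have hrng : LinearMap.range (u₁.prod u₂) = LinearMap.range (u₁'.prod u₂') := by
    ext xz
    simp only [LinearMap.mem_range, LinearMap.prod_apply, Function.prod]
    constructor
    · rintro ⟨⟨⟨c, d⟩, hcd⟩, hx⟩
      rw [hu₁, hu₂] at hx
      have hgd : g c = h d := (hP (c, d)).mp hcd
      have hmem : (f c, g c) ∈ LinearMap.range (f'.prod g') := by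
        rw [← hrange]; exact ⟨c, rfl⟩
      obtain ⟨c', hc'⟩ := hmem
      have hc1 : f' c' = f c := congrArg Prod.fst hc'
      have hc2 : g' c' = g c := congrArg Prod.snd hc'
      refine ⟨⟨(c', d), (hP' (c', d)).mpr (by simpa [hc2] using hgd)⟩, ?_⟩
      rw [hu₁', hu₂']
      simpa [hc1] using hx
    · rintro ⟨⟨⟨c', d⟩, hcd⟩, hx⟩
      rw [hu₁', hu₂'] at hx
      have hgd : g' c' = h d := (hP' (c', d)).mp hcd
      have hmem : (f' c', g' c') ∈ LinearMap.range (f.prod g) := by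
        rw [hrange]; exact ⟨c', rfl⟩
      obtain ⟨c, hc⟩ := hmem
      have hc1 : f c = f' c' := congrArg Prod.fst hc
      have hc2 : g c = g' c' := congrArg Prod.snd hc
      refine ⟨⟨(c, d), (hP (c, d)).mpr (by simpa [hc2] using hgd)⟩, ?_⟩
      rw [hu₁, hu₂]
      simpa [hc1] using hx
  refine ⟨hrng, ?_⟩
  -- dim C = dim C'
  have h1 := LinearMap.finrank_range_add_finrank_ker (f.prod g)
  have h2 := LinearMap.finrank_range_add_finrank_ker (f'.prod g')
  rw [hrange, hker] at h1
  have hC : finrank F C = finrank F C' := by omega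
  -- P and P' are kernels of "difference" maps
  have hPker : P = LinearMap.ker ((g.comp (LinearMap.fst F C D))
      - (h.comp (LinearMap.snd F C D))) := by
    ext cd
    rw [hP cd, LinearMap.mem_ker]
    simp [sub_eq_zero]
  have hP'ker : P' = LinearMap.ker ((g'.comp (LinearMap.fst F C' D))
      - (h.comp (LinearMap.snd F C' D))) := by
    ext cd
    rw [hP' cd, LinearMap.mem_ker]
    simp [sub_eq_zero]
  have h3 := LinearMap.finrank_range_add_finrank_ker
    ((g.comp (LinearMap.fst F C D)) - (h.comp (LinearMap.snd F C D)))
  have h4 := LinearMap.finrank_range_add_finrank_ker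
    ((g'.comp (LinearMap.fst F C' D)) - (h.comp (LinearMap.snd F C' D)))
  rw [range_sub_comp_fst_snd, finrank_prod] at h3 h4
  rw [hg_range] at h3
  have hPP' : finrank F P = finrank F P' := by
    rw [hPker, hP'ker]; omega
  have h5 := LinearMap.finrank_range_add_finrank_ker (u₁.prod u₂)
  have h6 := LinearMap.finrank_range_add_finrank_ker (u₁'.prod u₂')
  rw [hrng] at h5
  omega
end
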